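/- A Kripke frame F = (S,R) is transitive if and only if F validates the formula Tr: (•q ∧ Δp ∧ ∘(¬q → p)) → ∘(¬q → ∘(¬r → p)), where p, q, r are distinct propositional variables. That is, R is transitive iff for every valuation V on F and every world s, ((F,V),s) satisfies Tr. -/

import Mathlib

inductive Form : Type
  | atom : Nat → Form
  | neg : Form → Form
  | and : Form → Form → Form
  | nabla : Form → Form
  | bull : Form → Form

namespace Form
def imp (φ ψ : Form) : Form := neg (and φ (neg ψ))
def orf (φ ψ : Form) : Form := neg (and (neg φ) (neg ψ))
def ifff (φ ψ : Form) : Form := and (imp φ ψ) (imp ψ φ)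
def delta (φ : Form) : Form := neg (nabla φ)
def circ (φ : Form) : Form := neg (bull φ)
end Form

structure Model (W : Type) where
  R : W → W → Prop
  V : Nat → W → Prop

def sat {W : Type} (M : Model W) : W → Form → Prop
  | s, .atom n => M.V n s
  | s, .neg φ => ¬ sat M s φ
  | s, .and φ ψ => sat M s φ ∧ sat M s ψ
  | s, .nabla φ => ∃ t u, M.R s t ∧ M.R s u ∧ sat M t φ ∧ ¬ sat M u φ
  | s, .bull φ => sat M s φ ∧ ∃ t, M.R s t ∧ ¬ sat M t φ

/-- The formula `Tr`: `(•q ∧ Δp ∧ ∘(¬q → p)) → ∘(¬q → ∘(¬r → p))`,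
with `p = atom 0`, `q = atom 1`, `r = atom 2` (distinct variables). -/
def Tr : Form :=
  Form.imp
    (.and (.bull (.atom 1))
      (.and (Form.delta (.atom 0)) (Form.circ (Form.imp (.neg (.atom 1)) (.atom 0)))))
    (Form.circ (Form.imp (.neg (.atom 1))
      (Form.circ (Form.imp (.neg (.atom 2)) (.atom 0)))))

theorem stmt5 (W : Type) [Nonempty W] (R : W → W → Prop) :
    (∀ s t u : W, R s t → R t u → R s u) ↔
      ∀ (V : Nat → W → Prop) (s : W), sat (Model.mk R V) s Tr := by
  constructor
  · intro htrans V s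
    simp only [Tr, Form.imp, Form.delta, Form.circ, sat]
    push_neg
    intro h
    obtain ⟨⟨hq, t0, hst0, hqt0⟩, hdel, hcirc⟩ := h
    have hpt0 : V 0 t0 := hcirc (fun h => absurd hq h) t0 hst0 hqt0
    have hallp : ∀ x, R s x → V 0 x := fun x hsx => hdel t0 x hst0 hsx hpt0
    intro _ x hsx _ _ y hxy _
    exact hallp y (htrans s x y hsx hxy)
  · intro h s t u hst htu
    by_contra hsu
    have hts : t ≠ s := fun he => hsu (he ▸ htu)
    have := h (fun n x => match n with | 0 => R s x | 1 => x = s | _ => False) s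
    simp only [Tr, Form.imp, Form.delta, Form.circ, sat] at this
    push_neg at this
    exact hsu (this ⟨⟨trivial, t, hst, hts⟩, fun _ _ _ hb _ => hb, fun _ x hx _ => hx⟩
      (fun h => h.elim) t hst hts (fun _ => hst) u htu trivial)
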